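/- In a finite graded directed graph, for every connected component C (of the underlying undirected graph), Σ_{u ∈ C} LP(u)·RP(u) = Σ_{η ∈ P(C)} (len(η) + 1), where P(C) is the set of root-to-leaf paths contained in C and len(η) is the number of edges of η. Consequently Σ_{u ∈ C} LP(u)·RP(u) = |P(C)| · (E[len] + 1), where E[len] is the average length of a root-to-leaf path in C. -/

import Mathlib

/-- A leaf of a directed graph: a vertex with no outgoing edges. -/
def IsLeaf {V : Type*} (E : V → V → Prop) (u : V) : Prop := ∀ v, ¬ E u v

/-- A root of a directed graph: a vertex with no incoming edges. -/
def IsRoot {V : Type*} (E : V → V → Prop) (u : V) : Prop := ∀ t, ¬ E t u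

namespace Stmt2Aux

variable {V : Type} [Fintype V] [DecidableEq V]

/-- Descending paths from `u` to a leaf. -/
noncomputable def DP (E : V → V → Prop) (u : V) : Finset (List V) :=
  letI := Classical.propDecidable
  ((Finset.univ : Finset {l : List V // l.Nodup}).filter
    (fun (l : {l : List V // l.Nodup}) => l.1.Chain' E ∧ l.1.head? = some u ∧
      ∀ w ∈ l.1.getLast?, IsLeaf E w)).map
    ⟨Subtype.val, Subtype.val_injective⟩

lemma mem_DP {E : V → V → Prop} {u : V} {l : List V} :
    l ∈ DP E u ↔ l.Nodup ∧ l.Chain' E ∧ l.head? = some u ∧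
      ∀ w ∈ l.getLast?, IsLeaf E w := by
  classical
  simp only [DP, Finset.mem_map, Finset.mem_filter, Finset.mem_univ, true_and,
    Function.Embedding.coeFn_mk]
  constructor
  · rintro ⟨⟨l', hnd⟩, ⟨h1, h2, h3⟩, rfl⟩
    exact ⟨hnd, h1, h2, h3⟩
  · rintro ⟨hnd, h1, h2, h3⟩
    exact ⟨⟨l, hnd⟩, ⟨h1, h2, h3⟩, rfl⟩

lemma nodup_of_chain' {E : V → V → Prop} {dim : V → ℤ}
    (hdim : ∀ u v, E u v → dim u < dim v) {l : List V}
    (h : l.Chain' E) : l.Nodup := by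
  have h2 : l.Chain' (fun a b => dim a < dim b) := h.imp (fun a b hab => hdim a b hab)
  haveI : IsTrans V (fun a b => dim a < dim b) := ⟨fun _ _ _ => lt_trans⟩
  have h3 : l.Pairwise (fun a b => dim a < dim b) := List.isChain_iff_pairwise.mp h2
  exact h3.imp (fun {a b} hab he => by subst he; exact lt_irrefl _ hab)

lemma DP_leaf {E : V → V → Prop} {u : V} (hu : IsLeaf E u) : DP E u = {[u]} := by
  ext l
  rw [mem_DP, Finset.mem_singleton]
  constructor
  · rintro ⟨hnd, hc, hh, hl⟩
    match l, hh with
    | a :: t, hh =>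
      simp only [List.head?_cons, Option.some_inj] at hh
      subst hh
      match t with
      | [] => rfl
      | b :: t' =>
        simp only [List.Chain', List.isChain_cons_cons] at hc
        exact absurd hc.1 (hu b)
  · rintro rfl
    refine ⟨List.nodup_singleton u, List.isChain_singleton u, rfl, ?_⟩
    intro w hw
    simp only [List.getLast?_singleton, Option.mem_def, Option.some_inj] at hw
    subst hw; exact hu

lemma DP_not_leaf {E : V → V → Prop} [DecidableRel E] {dim : V → ℤ}
    (hdim : ∀ u v, E u v → dim u < dim v) {u : V} (hu : ¬ IsLeaf E u) :
    DP E u = (Finset.univ.filter (fun v => E u v)).biUnion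
      (fun v => (DP E v).image (u :: ·)) := by
  ext l
  rw [mem_DP]
  simp only [Finset.mem_biUnion, Finset.mem_filter, Finset.mem_univ, true_and,
    Finset.mem_image]
  constructor
  · rintro ⟨hnd, hc, hh, hl⟩
    match l, hh with
    | a :: t, hh =>
      simp only [List.head?_cons, Option.some_inj] at hh
      subst hh
      match t with
      | [] =>
        exfalso
        apply hu
        have := hl a (by simp [List.getLast?_singleton])
        exact this
      | b :: t' =>
        simp only [List.Chain', List.isChain_cons_cons] at hc
        refine ⟨b, hc.1, b :: t', ?_, rfl⟩
        rw [mem_DP]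
        refine ⟨hnd.of_cons, hc.2, rfl, ?_⟩
        intro w hw
        apply hl
        rw [List.getLast?_cons_cons]
        exact hw
  · rintro ⟨v, hv, t, ht, rfl⟩
    rw [mem_DP] at ht
    obtain ⟨hnd, hc, hh, hl⟩ := ht
    have hc' : (u :: t).Chain' E := by
      simp only [List.Chain', List.isChain_cons]
      refine ⟨fun y hy => ?_, hc⟩
      rw [hh, Option.mem_def, Option.some_inj] at hy
      subst hy; exact hv
    refine ⟨nodup_of_chain' hdim hc', hc', rfl, ?_⟩
    intro w hw
    apply hl
    match t, hh with
    | a :: t', _ =>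
      rw [List.getLast?_cons_cons] at hw
      exact hw

lemma LP_eq_card {E : V → V → Prop} [DecidableRel E] {dim : V → ℤ}
    (hdim : ∀ u v, E u v → dim u < dim v) (LP : V → ℕ)
    (hleaf : ∀ u, IsLeaf E u → LP u = 1)
    (hrec : ∀ u, ¬ IsLeaf E u →
      LP u = ∑ v ∈ Finset.univ.filter (fun v => E u v), LP v)
    (u : V) : LP u = (DP E u).card := by
  suffices h : ∀ k u, (Finset.univ.filter (fun v => dim u < dim v)).card ≤ k →
      LP u = (DP E u).card from h _ u le_rfl
  intro k
  induction k with
  | zero =>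
    intro u hk
    have hl : IsLeaf E u := by
      intro v hv
      have hmem : v ∈ Finset.univ.filter (fun v => dim u < dim v) :=
        Finset.mem_filter.mpr ⟨Finset.mem_univ v, hdim u v hv⟩
      have := Finset.card_pos.mpr ⟨v, hmem⟩
      omega
    rw [hleaf u hl, DP_leaf hl, Finset.card_singleton]
  | succ k ih =>
    intro u hk
    by_cases hl : IsLeaf E u
    · rw [hleaf u hl, DP_leaf hl, Finset.card_singleton]
    · rw [hrec u hl, DP_not_leaf hdim hl, Finset.card_biUnion]
      · apply Finset.sum_congr rfl
        intro v hv
        rw [Finset.mem_filter] at hv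
        rw [Finset.card_image_of_injective _ (fun a b h => (List.cons.inj h).2)]
        refine (ih v ?_)
        have hsub : Finset.univ.filter (fun w => dim v < dim w) ⊆
            (Finset.univ.filter (fun w => dim u < dim w)).erase v := by
          intro x hx
          rw [Finset.mem_filter] at hx
          rw [Finset.mem_erase, Finset.mem_filter]
          refine ⟨fun he => by subst he; exact lt_irrefl _ hx.2, Finset.mem_univ x, lt_trans (hdim u v hv.2) hx.2⟩
        have := Finset.card_le_card hsub
        rw [Finset.card_erase_of_mem (Finset.mem_filter.mpr ⟨Finset.mem_univ v, hdim u v hv.2⟩)] at this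
        omega
      · intro x hx y hy hxy
        rw [Function.onFun, Finset.disjoint_left]
        rintro l hlx hly
        rw [Finset.mem_image] at hlx hly
        obtain ⟨t, ht, rfl⟩ := hlx
        obtain ⟨t', ht', he⟩ := hly
        have : t' = t := (List.cons.inj he).2
        subst this
        rw [mem_DP] at ht ht'
        rw [ht.2.2.1] at ht'
        exact hxy (Option.some_inj.mp ht'.2.2.1.symm).symm

lemma some_or' {α : Type*} (a : α) (o : Option α) : (some a).or o = some a := rfl

lemma none_or' {α : Type*} (o : Option α) : Option.or none o = o := by cases o <;> rfl

lemma chain_connected {r : V → V → Prop} : ∀ (b : V) (t : List V),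
    (b :: t).Chain' r → ∀ x ∈ b :: t,
    Relation.ReflTransGen (fun a c => r a c ∨ r c a) b x := by
  intro b t
  induction t generalizing b with
  | nil =>
    intro _ x hx
    simp only [List.mem_singleton] at hx
    subst hx
    exact Relation.ReflTransGen.refl
  | cons c t' ih =>
    intro h x hx
    simp only [List.Chain', List.isChain_cons_cons] at h
    rcases List.mem_cons.mp hx with rfl | hx'
    · exact Relation.ReflTransGen.refl
    · exact (Relation.ReflTransGen.single (r := fun a c => r a c ∨ r c a) (Or.inl h.1)).trans (ih c h.2 x hx')

lemma takeWhile_append_of {P : V → Bool} {l₁ l₂ : List V} {a : V}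
    (h : ∀ x ∈ l₁, P x = true) (h2 : P a = false) :
    (l₁ ++ a :: l₂).takeWhile P = l₁ := by
  induction l₁ with
  | nil => simp [List.takeWhile_cons, h2]
  | cons b t ih =>
    simp only [List.cons_append, List.takeWhile_cons, h b List.mem_cons_self, if_true]
    rw [ih (fun x hx => h x (List.mem_cons_of_mem b hx))]

lemma dropWhile_append_of {P : V → Bool} {l₁ l₂ : List V} {a : V}
    (h : ∀ x ∈ l₁, P x = true) (h2 : P a = false) :
    (l₁ ++ a :: l₂).dropWhile P = a :: l₂ := by
  induction l₁ with
  | nil => simp [List.dropWhile_cons, h2]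
  | cons b t ih =>
    simp only [List.cons_append, List.dropWhile_cons, h b List.mem_cons_self, if_true]
    exact ih (fun x hx => h x (List.mem_cons_of_mem b hx))

lemma head?_eq_cons {l : List V} {u : V} (h : l.head? = some u) :
    ∃ t, l = u :: t := by
  cases l with
  | nil => simp at h
  | cons a t =>
    simp only [List.head?_cons, Option.some_inj] at h
    exact ⟨t, by rw [h]⟩

lemma split_card {E : V → V → Prop} [DecidableRel E] {dim : V → ℤ}
    (hdim : ∀ u v, E u v → dim u < dim v) {C : Finset V}
    (hC : ∀ u ∈ C, ∀ v, v ∈ C ↔ Relation.ReflTransGen (fun a b => E a b ∨ E b a) u v)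
    (T : Finset (List V))
    (hT : ∀ l : List V, l ∈ T ↔ (l ≠ [] ∧ l.Chain' E ∧
      (∀ w ∈ l.head?, IsRoot E w) ∧ (∀ w ∈ l.getLast?, IsLeaf E w) ∧
      ∀ w ∈ l, w ∈ C))
    {u : V} (hu : u ∈ C) :
    (DP (fun a b => E b a) u).card * (DP E u).card
      = (T.filter (fun l => u ∈ l)).card := by
  rw [← Finset.card_product]
  refine Finset.card_bij' (fun pq _ => pq.1.reverse ++ pq.2.tail)
    (fun l _ => ((l.takeWhile (fun w => decide (w ≠ u)) ++ [u]).reverse,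
      l.dropWhile (fun w => decide (w ≠ u)))) ?hi ?hj ?li ?ri
  case hi =>
    rintro ⟨p, q⟩ hpq
    rw [Finset.mem_product] at hpq
    obtain ⟨hp, hq⟩ := hpq
    rw [mem_DP] at hp hq
    obtain ⟨hpnd, hpc, hph, hpl⟩ := hp
    obtain ⟨hqnd, hqc, hqh, hql⟩ := hq
    obtain ⟨pt, rfl⟩ := head?_eq_cons hph
    obtain ⟨qt, rfl⟩ := head?_eq_cons hqh
    dsimp only
    rw [Finset.mem_filter]
    refine ⟨(hT _).mpr ⟨?_, ?_, ?_, ?_, ?_⟩, ?_⟩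
    · simp
    · -- chain
      simp only [List.Chain', List.isChain_append]
      refine ⟨List.isChain_reverse.mpr hpc, hqc.tail, ?_⟩
      intro x hx y hy
      rw [List.getLast?_reverse, List.head?_cons, Option.mem_def, Option.some_inj] at hx
      subst hx
      simp only [List.tail_cons] at hy
      exact (List.isChain_cons.mp hqc).1 y hy
    · -- head is root
      intro w hw
      rw [List.head?_append, List.head?_reverse] at hw
      obtain ⟨x, hx⟩ := Option.isSome_iff_exists.mp
        (List.getLast?_isSome.mpr (List.cons_ne_nil u pt))
      rw [hx, some_or', Option.mem_def, Option.some_inj] at hw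
      subst hw
      exact hpl x hx
    · -- last is leaf
      intro w hw
      rw [List.getLast?_append] at hw
      simp only [List.tail_cons, List.getLast?_reverse, List.head?_cons] at hw
      match qt, hql, hw with
      | [], hql, hw =>
        simp only [List.getLast?_nil, none_or', Option.mem_def,
          Option.some_inj] at hw
        subst hw
        exact hql u (by simp)
      | c :: qt', hql, hw =>
        obtain ⟨x, hx⟩ := Option.isSome_iff_exists.mp
          (List.getLast?_isSome.mpr (List.cons_ne_nil c qt'))
        rw [hx, some_or', Option.mem_def, Option.some_inj] at hw
        subst hw
        apply hql
        rw [List.getLast?_cons_cons, hx]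
        rfl
    · -- all in C
      intro w hw
      rw [List.mem_append] at hw
      rcases hw with hw | hw
      · rw [List.mem_reverse] at hw
        have hrel := chain_connected u pt hpc w hw
        exact (hC u hu w).mpr (Relation.ReflTransGen.mono (fun a b h => h.symm) _ _ hrel)
      · have hmem : w ∈ u :: qt := List.mem_cons_of_mem u (by simpa using hw)
        have hrel := chain_connected u qt hqc w hmem
        exact (hC u hu w).mpr hrel
    · -- u ∈ l
      simp
  case hj =>
    intro l hl
    beta_reduce
    rw [Finset.mem_filter] at hl
    obtain ⟨hlT, hul⟩ := hl
    rw [hT] at hlT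
    obtain ⟨hne, hc, hroot, hleaf, hinC⟩ := hlT
    set P : V → Bool := fun w => decide (w ≠ u) with hP
    have hd_ne : l.dropWhile P ≠ [] := by
      intro h
      rw [List.dropWhile_eq_nil_iff] at h
      have h2 := h u hul
      simp [hP] at h2
    have hd_head : (l.dropWhile P).head hd_ne = u :=
      not_not.mp (of_decide_eq_false (List.head_dropWhile_not P hd_ne))
    have hdrop : l.dropWhile P = u :: (l.dropWhile P).tail := by
      conv_lhs => rw [← List.cons_head_tail hd_ne]
      rw [hd_head]
    have hdecomp : l = l.takeWhile P ++ (u :: (l.dropWhile P).tail) := by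
      conv_lhs => rw [← List.takeWhile_append_dropWhile (p := P) (l := l)]
      rw [hdrop]
      rfl
    set a := l.takeWhile P with ha
    set b := (l.dropWhile P).tail with hb
    have hnd : l.Nodup := nodup_of_chain' hdim hc
    have hpre : (a ++ [u]) <+: l := ⟨b, by rw [hdecomp]; simp⟩
    have hsuf : (u :: b) <:+ l := ⟨a, by rw [hdecomp]⟩
    rw [Finset.mem_product]
    constructor
    · rw [mem_DP]
      refine ⟨?_, ?_, ?_, ?_⟩
      · rw [List.nodup_reverse]
        exact (hpre.sublist).nodup hnd
      · simp only [List.Chain', List.isChain_reverse]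
        exact hc.prefix hpre
      · rw [List.head?_reverse, List.getLast?_concat]
      · intro w hw
        rw [List.getLast?_reverse] at hw
        apply hroot
        rw [hdecomp, List.head?_append]
        rw [List.head?_append] at hw
        exact hw
    · rw [hdrop, mem_DP]
      refine ⟨(hsuf.sublist).nodup hnd, hc.suffix hsuf, rfl, ?_⟩
      intro w hw
      apply hleaf
      rw [hdecomp, List.getLast?_append]
      obtain ⟨x, hx⟩ := Option.isSome_iff_exists.mp
        (List.getLast?_isSome.mpr (List.cons_ne_nil u b))
      rw [hx, some_or']
      rw [hx] at hw
      exact hw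
  case li =>
    rintro ⟨p, q⟩ hpq
    rw [Finset.mem_product] at hpq
    obtain ⟨hp, hq⟩ := hpq
    rw [mem_DP] at hp hq
    obtain ⟨hpnd, hpc, hph, hpl⟩ := hp
    obtain ⟨hqnd, hqc, hqh, hql⟩ := hq
    obtain ⟨pt, rfl⟩ := head?_eq_cons hph
    obtain ⟨qt, rfl⟩ := head?_eq_cons hqh
    dsimp only
    have hnotu : ∀ x ∈ pt.reverse, (fun w => decide (w ≠ u)) x = true := by
      intro x hx
      rw [List.mem_reverse] at hx
      simp only [decide_eq_true_eq]
      intro he; subst he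
      exact (List.nodup_cons.mp hpnd).1 hx
    have hPu : (fun w => decide (w ≠ u)) u = false := by simp
    simp only [List.reverse_cons, List.tail_cons, List.append_assoc, List.cons_append,
      List.nil_append]
    rw [takeWhile_append_of hnotu hPu, dropWhile_append_of hnotu hPu]
    simp
  case ri =>
    intro l hl
    beta_reduce
    rw [Finset.mem_filter] at hl
    obtain ⟨hlT, hul⟩ := hl
    set P : V → Bool := fun w => decide (w ≠ u) with hP
    have hd_ne : l.dropWhile P ≠ [] := by
      intro h
      rw [List.dropWhile_eq_nil_iff] at h
      have h2 := h u hul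
      simp [hP] at h2
    have hd_head : (l.dropWhile P).head hd_ne = u :=
      not_not.mp (of_decide_eq_false (List.head_dropWhile_not P hd_ne))
    have hdrop : l.dropWhile P = u :: (l.dropWhile P).tail := by
      conv_lhs => rw [← List.cons_head_tail hd_ne]
      rw [hd_head]
    dsimp only
    simp only [List.reverse_reverse, List.append_assoc, List.singleton_append]
    conv_rhs => rw [← List.takeWhile_append_dropWhile (p := P) (l := l)]
    rw [hdrop]
    rfl

end Stmt2Aux

/-- In a finite graded directed graph, for every connected component `C` of the
underlying undirected graph, `Σ_{u ∈ C} LP(u)·RP(u) = Σ_{η ∈ P(C)} (len(η)+1)`,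
where `P(C)` is the (finite) set of root-to-leaf paths contained in `C`;
consequently this sum equals `|P(C)| · (E[len] + 1)`, `E[len]` being the average
length of a root-to-leaf path in `C`. Note `len(η) + 1` is the number of
vertices of the path `η`. -/
theorem stmt2 {V : Type} [Fintype V] [DecidableEq V]
    (E : V → V → Prop) [DecidableRel E] (dim : V → ℤ)
    (hdim : ∀ u v, E u v → dim u < dim v)
    (LP RP : V → ℕ)
    (hLPleaf : ∀ u, IsLeaf E u → LP u = 1)
    (hLPrec : ∀ u, ¬ IsLeaf E u →
      LP u = ∑ v ∈ Finset.univ.filter (fun v => E u v), LP v)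
    (hRProot : ∀ u, IsRoot E u → RP u = 1)
    (hRPrec : ∀ u, ¬ IsRoot E u →
      RP u = ∑ t ∈ Finset.univ.filter (fun t => E t u), RP t)
    (C : Finset V) (hCne : C.Nonempty)
    (hC : ∀ u ∈ C, ∀ v, v ∈ C ↔ Relation.ReflTransGen (fun a b => E a b ∨ E b a) u v)
    (S : Set (List V))
    (hS : S = {l : List V | l ≠ [] ∧ l.Chain' E ∧
      (∀ w ∈ l.head?, IsRoot E w) ∧ (∀ w ∈ l.getLast?, IsLeaf E w) ∧
      ∀ w ∈ l, w ∈ C})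
    (hfin : S.Finite)
    (Elen : ℚ)
    (hE : Elen = (∑ l ∈ hfin.toFinset, ((l.length : ℚ) - 1)) / hfin.toFinset.card) :
    (∑ u ∈ C, LP u * RP u) = (∑ l ∈ hfin.toFinset, l.length) ∧
    ((∑ u ∈ C, LP u * RP u : ℕ) : ℚ) = hfin.toFinset.card * (Elen + 1) := by
  classical
  have hT : ∀ l : List V, l ∈ hfin.toFinset ↔ (l ≠ [] ∧ l.Chain' E ∧
      (∀ w ∈ l.head?, IsRoot E w) ∧ (∀ w ∈ l.getLast?, IsLeaf E w) ∧
      ∀ w ∈ l, w ∈ C) := by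
    intro l
    rw [Set.Finite.mem_toFinset, hS]
    rfl
  have hLP : ∀ u, LP u = (Stmt2Aux.DP E u).card :=
    Stmt2Aux.LP_eq_card hdim LP hLPleaf hLPrec
  have h1 : ∀ u, IsLeaf (fun a b => E b a) u → RP u = 1 :=
    fun u h => hRProot u (fun t => h t)
  have h2 : ∀ u, ¬ IsLeaf (fun a b => E b a) u →
      RP u = ∑ v ∈ Finset.univ.filter (fun v => E v u), RP v :=
    fun u h => hRPrec u (fun hr => h (fun t => hr t))
  have hRP : ∀ u, RP u = (Stmt2Aux.DP (fun a b => E b a) u).card :=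
    @Stmt2Aux.LP_eq_card V _ _ (fun a b => E b a)
      (fun a b => ‹DecidableRel E› b a) (fun v => -dim v)
      (fun u v h => by simpa using hdim v u h) RP h1 h2
  have key : (∑ u ∈ C, LP u * RP u) = (∑ l ∈ hfin.toFinset, l.length) := by
    calc ∑ u ∈ C, LP u * RP u
        = ∑ u ∈ C, ((hfin.toFinset).filter (fun l => u ∈ l)).card := by
          apply Finset.sum_congr rfl
          intro u hu
          rw [hLP u, hRP u, mul_comm]
          exact Stmt2Aux.split_card hdim hC hfin.toFinset hT hu
      _ = ∑ u ∈ C, ∑ l ∈ hfin.toFinset, (if u ∈ l then 1 else 0) :=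
          Finset.sum_congr rfl (fun u _ => by rw [Finset.card_filter])
      _ = ∑ l ∈ hfin.toFinset, ∑ u ∈ C, (if u ∈ l then 1 else 0) := Finset.sum_comm
      _ = ∑ l ∈ hfin.toFinset, l.length := by
          apply Finset.sum_congr rfl
          intro l hl
          obtain ⟨hne, hc, _, _, hinC⟩ := (hT l).mp hl
          have hfe : C.filter (fun u => u ∈ l) = l.toFinset := by
            ext x
            simp only [Finset.mem_filter, List.mem_toFinset]
            exact ⟨fun h => h.2, fun h => ⟨hinC x h, h⟩⟩
          rw [← Finset.card_filter, hfe,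
            List.toFinset_card_of_nodup (Stmt2Aux.nodup_of_chain' hdim hc)]
  refine ⟨key, ?_⟩
  rw [key, hE]
  rcases eq_or_ne hfin.toFinset.card 0 with h0 | h0
  · rw [Finset.card_eq_zero] at h0
    rw [h0]
    simp
  · have hn : ((hfin.toFinset.card : ℚ)) ≠ 0 := Nat.cast_ne_zero.mpr h0
    have hsub : ∑ l ∈ hfin.toFinset, ((l.length : ℚ) - 1)
        = (∑ l ∈ hfin.toFinset, (l.length : ℚ)) - hfin.toFinset.card := by
      rw [Finset.sum_sub_distrib, Finset.sum_const, nsmul_eq_mul, mul_one]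
    rw [hsub]
    push_cast
    field_simp
    ring
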